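/- Let 𝒳 be an infinite maximal almost disjoint family of infinite subsets of ℕ. For each X ∈ 𝒳 let M(X) = {Y : Y is an infinite subset of ℕ and X ∩ Y is infinite}. Then: (1) each M(X), viewed as a subset of Cantor space ℕ → Bool via characteristic functions, is a Gδ set; (2) the sets M(X) for X ∈ 𝒳 cover the collection of all infinite subsets of ℕ; and (3) for every proper subfamily 𝒳' ⊊ 𝒳, the sets M(X) for X ∈ 𝒳' do not cover the collection of all infinite subsets of ℕ. Consequently the cardinality of 𝒳 is a Π⁰₂-characteristic. -/
import Mathlib
open Cardinal Set

/-- κ is a Π⁰₂-characteristic: κ is uncountable and some family of κ many Gδ subsets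
of Baire space covers it, while no subfamily of cardinality < κ does. -/
def IsPi02Char (κ : Cardinal) : Prop :=
  Cardinal.aleph0 < κ ∧
    ∃ F : Set (Set (ℕ → ℕ)), (∀ A ∈ F, IsGδ A) ∧ ⋃₀ F = Set.univ ∧ #F = κ ∧
      ∀ F' ⊆ F, #F' < κ → ⋃₀ F' ≠ Set.univ

lemma unbdd_of_infinite {S : Set ℕ} (h : S.Infinite) (m : ℕ) : ∃ n ∈ S, m < n := by
  by_contra hc
  push_neg at hc
  exact h ((Set.finite_Iic m).subset fun n hn => hc n hn)

lemma infinite_iff_unbdd (S : Set ℕ) : S.Infinite ↔ ∀ m, ∃ n ∈ S, m < n :=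
  ⟨unbdd_of_infinite, Set.infinite_of_forall_exists_gt⟩

/-- strictly increasing sequence coded by f -/
def gseq (f : ℕ → ℕ) (n : ℕ) : ℕ := (∑ i ∈ Finset.range (n+1), f i) + n

lemma gseq_succ (f : ℕ → ℕ) (n : ℕ) : gseq f (n+1) = gseq f n + f (n+1) + 1 := by
  simp [gseq, Finset.sum_range_succ]; ring

lemma gseq_strictMono (f : ℕ → ℕ) : StrictMono (gseq f) :=
  strictMono_nat_of_lt_succ fun n => by rw [gseq_succ]; omega

lemma gseq_surj {Y : Set ℕ} (hY : Y.Infinite) : ∃ f : ℕ → ℕ, Set.range (gseq f) = Y := by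
  have hY' : {n | n ∈ Y}.Infinite := hY
  set e := Nat.nth (· ∈ Y) with he
  have hmono : StrictMono e := Nat.nth_strictMono hY'
  refine ⟨fun n => Nat.rec (e 0) (fun n _ => e (n+1) - e n - 1) n, ?_⟩
  have key : ∀ n, gseq (fun n => Nat.rec (e 0) (fun n _ => e (n+1) - e n - 1) n) n = e n := by
    intro n
    induction n with
    | zero => simp [gseq]
    | succ n ih =>
      rw [gseq_succ, ih]
      have : e n < e (n+1) := hmono (by omega)
      show e n + (e (n+1) - e n - 1) + 1 = e (n+1)
      omega
  rw [funext key]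
  exact Nat.range_nth_of_infinite hY'

lemma gseq_cont (n : ℕ) : Continuous (fun f : ℕ → ℕ => gseq f n) := by
  unfold gseq
  exact (continuous_finset_sum _ fun i _ => continuous_apply i).add continuous_const

/-- the Gδ set in Baire space associated to X -/
def AX (X : Set ℕ) : Set (ℕ → ℕ) := {f | (X ∩ Set.range (gseq f)).Infinite}

lemma isGδ_AX (X : Set ℕ) : IsGδ (AX X) := by
  have : AX X = ⋂ m, ⋃ n, {f : ℕ → ℕ | gseq f n ∈ X ∧ m < gseq f n} := by
    ext f
    simp only [AX, Set.mem_setOf_eq, Set.mem_iInter, Set.mem_iUnion, infinite_iff_unbdd]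
    constructor
    · intro h m
      obtain ⟨k, ⟨hkX, n, hk⟩, hmk⟩ := h m
      exact ⟨n, by rw [hk]; exact hkX, by omega⟩
    · intro h m
      obtain ⟨n, h1, h2⟩ := h m
      exact ⟨gseq f n, ⟨h1, ⟨n, rfl⟩⟩, h2⟩
  rw [this]
  refine IsGδ.iInter_of_isOpen fun m => isOpen_iUnion fun n => ?_
  exact IsOpen.preimage (gseq_cont n) (isOpen_discrete {k | k ∈ X ∧ m < k})

lemma isGδ_M (X : Set ℕ) : IsGδ {f : ℕ → Bool |
    {n : ℕ | f n = true}.Infinite ∧ (X ∩ {n : ℕ | f n = true}).Infinite} := by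
  have : {f : ℕ → Bool | {n : ℕ | f n = true}.Infinite ∧ (X ∩ {n : ℕ | f n = true}).Infinite}
      = ⋂ m, ((⋃ n, {f : ℕ → Bool | m < n ∧ f n = true}) ∩
          (⋃ n, {f : ℕ → Bool | n ∈ X ∧ m < n ∧ f n = true})) := by
    ext f
    simp only [Set.mem_setOf_eq, Set.mem_iInter, Set.mem_inter_iff, Set.mem_iUnion,
      infinite_iff_unbdd]
    constructor
    · intro ⟨h1, h2⟩ m
      obtain ⟨n, hn, hmn⟩ := h1 m
      obtain ⟨k, ⟨hkX, hk⟩, hmk⟩ := h2 m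
      exact ⟨⟨n, hmn, hn⟩, ⟨k, hkX, hmk, hk⟩⟩
    · intro h
      constructor
      · intro m; obtain ⟨⟨n, h1, h2⟩, _⟩ := h m; exact ⟨n, h2, h1⟩
      · intro m; obtain ⟨_, ⟨n, h1, h2, h3⟩⟩ := h m; exact ⟨n, ⟨h1, h3⟩, h2⟩
  rw [this]
  refine IsGδ.iInter_of_isOpen fun m => IsOpen.inter ?_ ?_ <;>
    refine isOpen_iUnion fun n => ?_
  · by_cases hm : m < n
    · have : {f : ℕ → Bool | m < n ∧ f n = true} = (fun f : ℕ → Bool => f n) ⁻¹' {true} := by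
        ext f; simp [hm]
      rw [this]; exact (continuous_apply n).isOpen_preimage _ (isOpen_discrete _)
    · have : {f : ℕ → Bool | m < n ∧ f n = true} = ∅ := by ext f; simp [hm]
      rw [this]; exact isOpen_empty
  · by_cases hm : n ∈ X ∧ m < n
    · have : {f : ℕ → Bool | n ∈ X ∧ m < n ∧ f n = true}
          = (fun f : ℕ → Bool => f n) ⁻¹' {true} := by
        ext f; simp [hm.1, hm.2]
      rw [this]; exact (continuous_apply n).isOpen_preimage _ (isOpen_discrete _)
    · have : {f : ℕ → Bool | n ∈ X ∧ m < n ∧ f n = true} = ∅ := by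
        ext f; simp only [Set.mem_setOf_eq, Set.mem_empty_iff_false, iff_false]
        intro ⟨h1, h2, _⟩; exact hm ⟨h1, h2⟩
      rw [this]; exact isOpen_empty

lemma mad_uncountable (𝒳 : Set (Set ℕ))
    (h𝒳inf : 𝒳.Infinite)
    (hmem : ∀ X ∈ 𝒳, X.Infinite)
    (had : ∀ X ∈ 𝒳, ∀ X' ∈ 𝒳, X ≠ X' → (X ∩ X').Finite)
    (hmax : ∀ Y : Set ℕ, Y.Infinite → ∃ X ∈ 𝒳, (X ∩ Y).Infinite) :
    Cardinal.aleph0 < #𝒳 := by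
  rcases lt_or_ge Cardinal.aleph0 #𝒳 with h | h
  · exact h
  exfalso
  have hcnt : 𝒳.Countable :=
    Set.countable_coe_iff.mp (Cardinal.mk_le_aleph0_iff.mp h)
  have : Countable ↥𝒳 := hcnt.to_subtype
  have : Infinite ↥𝒳 := h𝒳inf.to_subtype
  obtain ⟨eqv⟩ : Nonempty (ℕ ≃ ↥𝒳) := nonempty_equiv_of_countable
  set e : ℕ → Set ℕ := fun n => (eqv n : Set ℕ) with he
  have hemem : ∀ n, e n ∈ 𝒳 := fun n => (eqv n).2
  have heinj : Function.Injective e := fun a b hab => by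
    have := Subtype.coe_injective hab
    exact eqv.injective this
  have hesurj : ∀ X ∈ 𝒳, ∃ n, e n = X := fun X hX => by
    obtain ⟨n, hn⟩ := eqv.surjective ⟨X, hX⟩
    exact ⟨n, congrArg Subtype.val hn⟩
  -- diagonal set
  have hS : ∀ n, (e n \ ⋃ i ∈ Finset.range n, e i).Infinite := by
    intro n
    have hT : (⋃ i ∈ Finset.range n, (e n ∩ e i)).Finite := by
      refine Set.Finite.biUnion (Finset.range n).finite_toSet fun i hi => ?_
      refine had _ (hemem n) _ (hemem i) fun hh => ?_
      have := heinj hh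
      simp only [Finset.coe_range, Set.mem_Iio] at hi
      omega
    refine ((hmem _ (hemem n)).diff hT).mono fun x hx => ⟨hx.1, fun hxU => hx.2 ?_⟩
    simp only [Set.mem_iUnion] at hxU ⊢
    obtain ⟨i, hi, hxi⟩ := hxU
    exact ⟨i, hi, hx.1, hxi⟩
  choose y hy using fun n => (hS n).nonempty
  have hy1 : ∀ n, y n ∈ e n := fun n => (hy n).1
  have hy2 : ∀ n i, i < n → y n ∉ e i := by
    intro n i hin hmemi
    exact (hy n).2 (Set.mem_biUnion (Finset.mem_range.mpr hin) hmemi)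
  have hyinj : Function.Injective y := by
    intro a b hab
    rcases lt_trichotomy a b with h' | h' | h'
    · exact ((hy2 b a h') (hab ▸ hy1 a)).elim
    · exact h'
    · exact ((hy2 a b h') (hab.symm ▸ hy1 b)).elim
  have hYinf : (Set.range y).Infinite := Set.infinite_range_of_injective hyinj
  obtain ⟨X, hX𝒳, hXY⟩ := hmax _ hYinf
  obtain ⟨i, rfl⟩ := hesurj X hX𝒳
  have : e i ∩ Set.range y ⊆ y '' Set.Iic i := by
    rintro x ⟨hxe, n, rfl⟩
    refine ⟨n, ?_, rfl⟩
    by_contra hni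
    exact hy2 n i (by simpa using hni) hxe
  exact hXY (((Set.finite_Iic i).image y).subset this)

theorem mad_family_pi02 (𝒳 : Set (Set ℕ))
    (h𝒳inf : 𝒳.Infinite)
    (hmem : ∀ X ∈ 𝒳, X.Infinite)
    (had : ∀ X ∈ 𝒳, ∀ X' ∈ 𝒳, X ≠ X' → (X ∩ X').Finite)
    (hmax : ∀ Y : Set ℕ, Y.Infinite → ∃ X ∈ 𝒳, (X ∩ Y).Infinite) :
    (∀ X ∈ 𝒳, IsGδ {f : ℕ → Bool |
        {n : ℕ | f n = true}.Infinite ∧ (X ∩ {n : ℕ | f n = true}).Infinite}) ∧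
    (∀ Y : Set ℕ, Y.Infinite → ∃ X ∈ 𝒳, (X ∩ Y).Infinite) ∧
    (∀ 𝒳' : Set (Set ℕ), 𝒳' ⊂ 𝒳 →
      ∃ Y : Set ℕ, Y.Infinite ∧ ∀ X ∈ 𝒳', ¬ (X ∩ Y).Infinite) ∧
    IsPi02Char #𝒳 := by
  -- key facts
  have hprop : ∀ 𝒳' : Set (Set ℕ), 𝒳' ⊂ 𝒳 →
      ∃ Y : Set ℕ, Y.Infinite ∧ ∀ X ∈ 𝒳', ¬ (X ∩ Y).Infinite := by
    intro 𝒳' h𝒳'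
    obtain ⟨X₀, hX₀𝒳, hX₀'⟩ := Set.exists_of_ssubset h𝒳'
    refine ⟨X₀, hmem _ hX₀𝒳, fun X hX hinf => ?_⟩
    have hX𝒳 : X ∈ 𝒳 := h𝒳'.1 hX
    have hne : X ≠ X₀ := fun hh => hX₀' (hh ▸ hX)
    exact hinf (had _ hX𝒳 _ hX₀𝒳 hne)
  have hinjA : Set.InjOn AX 𝒳 := by
    intro X hX X' hX' hAX
    by_contra hne
    have hdiff : (X \ X').Infinite := by
      have : X \ (X ∩ X') = X \ X' := by ext x; simp only [Set.mem_diff, Set.mem_inter_iff]; tauto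
      rw [← this]
      exact (hmem _ hX).diff (had _ hX _ hX' hne)
    obtain ⟨f, hf⟩ := gseq_surj hdiff
    have h1 : f ∈ AX X := by
      show (X ∩ Set.range (gseq f)).Infinite
      rw [hf]
      exact hdiff.mono fun x hx => ⟨hx.1, hx⟩
    have h2 : f ∉ AX X' := by
      show ¬ (X' ∩ Set.range (gseq f)).Infinite
      rw [hf, Set.not_infinite]
      exact Set.Finite.subset Set.finite_empty fun x hx => (hx.2.2 hx.1).elim
    exact h2 (hAX ▸ h1)
  refine ⟨fun X _ => isGδ_M X, hmax, hprop, ?_⟩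
  refine ⟨mad_uncountable 𝒳 h𝒳inf hmem had hmax, AX '' 𝒳, ?_, ?_, ?_, ?_⟩
  · rintro A ⟨X, _, rfl⟩; exact isGδ_AX X
  · rw [Set.eq_univ_iff_forall]
    intro f
    have : (Set.range (gseq f)).Infinite :=
      Set.infinite_range_of_injective (gseq_strictMono f).injective
    obtain ⟨X, hX, hXf⟩ := hmax _ this
    exact ⟨AX X, ⟨X, hX, rfl⟩, hXf⟩
  · exact Cardinal.mk_image_eq_of_injOn _ _ hinjA
  · intro F' hF' hcard hcov
    set 𝒳'' := {X ∈ 𝒳 | AX X ∈ F'} with h𝒳''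
    have hsub : 𝒳'' ⊆ 𝒳 := fun X hX => hX.1
    have hFeq : F' = AX '' 𝒳'' := by
      apply Set.Subset.antisymm
      · intro B hB
        obtain ⟨X, hX, rfl⟩ := hF' hB
        exact ⟨X, ⟨hX, hB⟩, rfl⟩
      · rintro B ⟨X, hX, rfl⟩; exact hX.2
    have hcard'' : #↥𝒳'' < #↥𝒳 := by
      have : #↥(AX '' 𝒳'') = #↥𝒳'' :=
        Cardinal.mk_image_eq_of_injOn _ _ (hinjA.mono hsub)
      rw [hFeq, this] at hcard
      exact hcard
    have hss : 𝒳'' ⊂ 𝒳 := by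
      refine ⟨hsub, fun hh => ?_⟩
      exact absurd (Cardinal.mk_le_mk_of_subset hh) (not_le_of_gt hcard'')
    obtain ⟨Y, hYinf, hY⟩ := hprop _ hss
    obtain ⟨f, hf⟩ := gseq_surj hYinf
    have : f ∈ ⋃₀ F' := hcov ▸ Set.mem_univ f
    obtain ⟨B, hBF', hfB⟩ := this
    rw [hFeq] at hBF'
    obtain ⟨X, hX, rfl⟩ := hBF'
    have : (X ∩ Set.range (gseq f)).Infinite := hfB
    rw [hf] at this
    exact hY X hX this
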